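/- arXiv:1311.4261 — 4 statements merged into one kernel-verified Lean document; each statement's English description precedes it below -/
import Mathlib

section
/- For a positive integer n, define a graph on Z/nZ where distinct x, y are adjacent if 2x = y (mod n) or 2y = x (mod n). This graph is connected if and only if n is a power of 2. -/
private lemma reach_pow (n : ℕ) (x : ZMod n) (k : ℕ) :
    (SimpleGraph.fromRel (fun x y : ZMod n => y = 2 * x)).Reachable x (2 ^ k * x) := by
  induction k with
  | zero => simpa using SimpleGraph.Reachable.refl x
  | succ k ih =>
    refine ih.trans ?_
    by_cases h : 2 * (2 ^ k * x) = 2 ^ k * x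
    · rw [pow_succ, mul_comm (2^k) 2, mul_assoc, h]
    · have hadj : (SimpleGraph.fromRel (fun x y : ZMod n => y = 2 * x)).Adj
          (2 ^ k * x) (2 ^ (k+1) * x) := by
        rw [SimpleGraph.fromRel_adj]
        constructor
        · intro heq
          apply h
          rw [pow_succ, mul_comm (2^k) 2, mul_assoc] at heq
          exact heq.symm
        · left; rw [pow_succ, mul_comm (2^k) 2, mul_assoc]
      exact hadj.reachable

theorem stmt_0 (n : ℕ) (hn : 0 < n) :
    (SimpleGraph.fromRel (fun x y : ZMod n => y = 2 * x)).Connected ↔ ∃ k : ℕ, n = 2 ^ k := by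
  constructor
  · intro hc
    set m := n / 2 ^ n.factorization 2 with hm
    have hmdvd : m ∣ n := Nat.ordCompl_dvd n 2
    have hmpos : 0 < m := Nat.ordCompl_pos 2 hn.ne'
    have hnot2 : ¬ 2 ∣ m := Nat.not_dvd_ordCompl Nat.prime_two hn.ne'
    haveI : NeZero m := ⟨hmpos.ne'⟩
    have hunit : IsUnit (2 : ZMod m) := by
      have : Nat.Coprime 2 m := (Nat.Prime.coprime_iff_not_dvd Nat.prime_two).mpr hnot2
      have := (ZMod.isUnit_iff_coprime 2 m).mpr this
      simpa using this
    let f : ZMod n →+* ZMod m := ZMod.castHom hmdvd (ZMod m)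
    have key : ∀ x y : ZMod n, ∀ _ : (SimpleGraph.fromRel
        (fun x y : ZMod n => y = 2 * x)).Walk x y, f x = 0 → f y = 0 := by
      intro x y w
      induction w with
      | nil => exact id
      | cons h p ih =>
        intro hx
        apply ih
        rw [SimpleGraph.fromRel_adj] at h
        rcases h.2 with h2 | h2
        · rw [h2, map_mul, hx, mul_zero]
        · rw [h2, map_mul] at hx
          have h2f : f 2 = 2 := by
            have : ((2 : ℕ) : ZMod n) = (2 : ZMod n) := by norm_num
            rw [← this, map_natCast]; norm_num
          rw [h2f] at hx
          exact (IsUnit.mul_right_eq_zero hunit).mp hx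
    have hreach := hc.preconnected 0 1
    obtain ⟨w⟩ := hreach
    have h1 : f 1 = 0 := key 0 1 w (by simp)
    have : (1 : ZMod m) = 0 := by simpa using h1
    have hm1 : m = 1 := by
      have hd : m ∣ 1 := (ZMod.natCast_eq_zero_iff 1 m).mp (by simpa using this)
      exact Nat.dvd_one.mp hd
    refine ⟨n.factorization 2, ?_⟩
    have := Nat.ordProj_mul_ordCompl_eq_self n 2
    simp only [← hm] at this
    rw [hm1, mul_one] at this
    omega
  · rintro ⟨k, rfl⟩
    haveI : Nonempty (ZMod (2^k)) := ⟨0⟩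
    refine ⟨fun x y => ?_⟩
    have hx := reach_pow (2^k) x k
    have hy := reach_pow (2^k) y k
    have hzero : (2 : ZMod (2^k)) ^ k = 0 := by
      have : ((2^k : ℕ) : ZMod (2^k)) = 0 := ZMod.natCast_self _
      exact_mod_cast this
    rw [hzero, zero_mul] at hx hy
    exact hx.trans hy.symm
end

section
/- For n = 3^k or n = 2·3^k with k ≥ 0, the graph on Z/nZ generated by T(x) = 3x + 1 (edges {x, T(x)} for x ≠ T(x)) is connected. -/
private def fstep (n : ℕ) (x : ZMod n) : ZMod n := 3 * x + 1

private lemma reach_step (n : ℕ) (x : ZMod n) :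
    (SimpleGraph.fromRel (fun x y : ZMod n => y = 3 * x + 1)).Reachable x (fstep n x) := by
  by_cases h : x = fstep n x
  · exact h ▸ SimpleGraph.Reachable.refl x
  · exact SimpleGraph.Adj.reachable (by
      rw [SimpleGraph.fromRel_adj]
      exact ⟨h, Or.inl rfl⟩)

private lemma reach_iter (n : ℕ) (m : ℕ) (x : ZMod n) :
    (SimpleGraph.fromRel (fun x y : ZMod n => y = 3 * x + 1)).Reachable x ((fstep n)^[m] x) := by
  induction m with
  | zero => exact SimpleGraph.Reachable.refl x
  | succ m ih =>
      rw [Function.iterate_succ_apply']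
      exact ih.trans (reach_step n ((fstep n)^[m] x))

private lemma iter_formula (n : ℕ) (m : ℕ) (x : ZMod n) :
    (fstep n)^[m] x = 3 ^ m * x + (fstep n)^[m] 0 := by
  induction m with
  | zero => simp
  | succ m ih =>
      rw [Function.iterate_succ_apply', Function.iterate_succ_apply' (fstep n) m 0, ih, fstep,
        fstep]
      ring

private lemma dichotomy (n k : ℕ) (h : n = 3 ^ k ∨ n = 2 * 3 ^ k) (x : ZMod n) :
    (3 : ZMod n) ^ k * x = 0 ∨ (3 : ZMod n) ^ k * x = 3 ^ k := by
  have hn0 : ((n : ℕ) : ZMod n) = 0 := ZMod.natCast_self n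
  have hn : 0 < n := by rcases h with h | h <;> subst h <;> positivity
  haveI : NeZero n := ⟨hn.ne'⟩
  have hx : ((x.val : ℕ) : ZMod n) = x := by rw [ZMod.natCast_val, ZMod.cast_id]
  rcases h with h | h
  · left
    have h3 : ((3 : ZMod n)) ^ k = 0 := by
      have h2 : ((3 ^ k : ℕ) : ZMod n) = 0 := by rw [← h]; exact hn0
      push_cast at h2
      exact h2
    rw [h3]; ring
  · have h3 : (2 : ZMod n) * 3 ^ k = 0 := by
      have h2 : ((2 * 3 ^ k : ℕ) : ZMod n) = 0 := by rw [← h]; exact hn0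
      push_cast at h2
      exact h2
    rcases Nat.even_or_odd x.val with ⟨q, hq⟩ | ⟨q, hq⟩
    · left
      rw [← hx, hq]
      push_cast
      calc (3:ZMod n) ^ k * ((q:ZMod n) + q) = (2 * 3 ^ k) * q := by ring
        _ = 0 := by rw [h3]; ring
    · right
      rw [← hx, hq]
      push_cast
      calc (3:ZMod n) ^ k * (2 * (q:ZMod n) + 1) = (2 * 3 ^ k) * q + 3 ^ k := by ring
        _ = 3 ^ k := by rw [h3]; ring

theorem stmt_5 (n k : ℕ) (h : n = 3 ^ k ∨ n = 2 * 3 ^ k) :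
    (SimpleGraph.fromRel (fun x y : ZMod n => y = 3 * x + 1)).Connected := by
  set G := SimpleGraph.fromRel (fun x y : ZMod n => y = 3 * x + 1) with hG
  have key01 : G.Reachable ((fstep n)^[k] 0) ((fstep n)^[k] 1) := by
    by_cases h01 : (0 : ZMod n) = 1
    · rw [h01]
    · have e : G.Adj 0 1 := by
        rw [hG, SimpleGraph.fromRel_adj]
        exact ⟨h01, Or.inl (by ring)⟩
      exact (reach_iter n k 0).symm.trans (e.reachable.trans (reach_iter n k 1))
  constructor
  · intro a b
    have ha := reach_iter n k a
    have hb := reach_iter n k b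
    rw [iter_formula] at ha hb
    have key : ∀ x : ZMod n, (3:ZMod n) ^ k * x + (fstep n)^[k] 0 = (fstep n)^[k] 0 ∨
        (3:ZMod n) ^ k * x + (fstep n)^[k] 0 = (fstep n)^[k] 1 := by
      intro x
      rcases dichotomy n k h x with hd | hd
      · left; rw [hd]; ring
      · right; rw [hd, iter_formula n k 1]; ring
    rcases key a with hA | hA <;> rcases key b with hB | hB <;> rw [hA] at ha <;> rw [hB] at hb
    · exact ha.trans hb.symm
    · exact ha.trans (key01.trans hb.symm)
    · exact ha.trans (key01.symm.trans hb.symm)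
    · exact ha.trans hb.symm
end

section
/- Let p be an odd prime such that p - 1 is not a power of 2. Then the graph on (Z/pZ)^* with edges {x, x^2} is disconnected. -/
lemma key_aux {G : Type*} [Group G] [Finite G] (q : ℕ) (hq : q.Prime) (hq2 : q ≠ 2)
    (x : G) : q ∣ orderOf (x ^ 2) ↔ q ∣ orderOf x := by
  rw [orderOf_pow]
  set d := orderOf x with hd
  have hdpos : 0 < d := orderOf_pos x
  set g := Nat.gcd d 2 with hg
  have hgd : g ∣ d := Nat.gcd_dvd_left d 2
  have hg2 : g ∣ 2 := Nat.gcd_dvd_right d 2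
  constructor
  · intro hdvd
    exact hdvd.trans (Nat.div_dvd_of_dvd hgd)
  · intro hdvd
    have hqg : ¬ q ∣ g := by
      intro hcon
      rcases (Nat.dvd_prime Nat.prime_two).mp hg2 with h1 | h1 <;> rw [h1] at hcon
      · exact hq.ne_one (Nat.dvd_one.mp hcon)
      · exact hq2 ((Nat.prime_dvd_prime_iff_eq hq Nat.prime_two).mp hcon)
    have : d = g * (d / g) := (Nat.mul_div_cancel' hgd).symm
    rw [this] at hdvd
    exact (Nat.Coprime.dvd_of_dvd_mul_left
      ((Nat.Prime.coprime_iff_not_dvd hq).mpr hqg) hdvd)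

theorem stmt_9 (p : ℕ) (hp : p.Prime) (hodd : Odd p)
    (h : ¬ ∃ k : ℕ, p - 1 = 2 ^ k) :
    ¬ (SimpleGraph.fromRel (fun x y : (ZMod p)ˣ => y = x ^ 2)).Connected := by
  intro hcon
  haveI : Fact p.Prime := ⟨hp⟩
  -- find odd prime q dividing p - 1
  have hp3 : 3 ≤ p := by
    rcases hp.eq_two_or_odd' with h2 | _
    · rw [h2] at hodd; exact absurd hodd (by norm_num)
    · have := hp.two_le
      rcases Nat.lt_or_ge p 3 with hlt | hge
      · have : p = 2 := by omega
        rw [this] at hodd; exact absurd hodd (by norm_num)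
      · exact hge
  obtain ⟨q, hq, hqdvd, hq2⟩ : ∃ q, q.Prime ∧ q ∣ (p - 1) ∧ q ≠ 2 := by
    by_contra hc
    push_neg at hc
    have : p - 1 = 2 ^ (p - 1).primeFactorsList.length :=
      Nat.eq_prime_pow_of_unique_prime_dvd (by omega) (fun {d} hd hdvd => hc d hd hdvd)
    exact h ⟨_, this⟩
  haveI : Fact q.Prime := ⟨hq⟩
  have hcard : Fintype.card (ZMod p)ˣ = p - 1 := by
    rw [ZMod.card_units_eq_totient, Nat.totient_prime hp]
  obtain ⟨x, hx⟩ : ∃ x : (ZMod p)ˣ, orderOf x = q := by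
    apply exists_prime_orderOf_dvd_card
    rw [hcard]; exact hqdvd
  -- invariant along walks
  have hinv : ∀ {a b : (ZMod p)ˣ},
      (SimpleGraph.fromRel (fun x y : (ZMod p)ˣ => y = x ^ 2)).Reachable a b →
      (q ∣ orderOf a ↔ q ∣ orderOf b) := by
    intro a b hr
    obtain ⟨w⟩ := hr
    induction w with
    | nil => rfl
    | cons hadj w ih =>
      refine Iff.trans ?_ ih
      rw [SimpleGraph.fromRel_adj] at hadj
      rcases hadj.2 with h1 | h1
      · rw [h1]; exact (key_aux q hq hq2 _).symm
      · rw [h1]; exact key_aux q hq hq2 _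
  have := (hinv (hcon.preconnected x 1)).mp (by rw [hx])
  rw [orderOf_one, Nat.dvd_one] at this
  exact hq.ne_one this
end

section
/- Let p be an odd prime such that p - 1 has a prime factor q with q ≠ 2 and q ≠ 3. Then the graph on (Z/pZ)^* generated by x ↦ x^2 and x ↦ x^3 is disconnected. -/
theorem stmt_15 (p q : ℕ) (hp : p.Prime) (hodd : Odd p) (hq : q.Prime)
    (hqd : q ∣ (p - 1)) (hq2 : q ≠ 2) (hq3 : q ≠ 3) :
    ¬ (SimpleGraph.fromRel (fun x y : (ZMod p)ˣ => y = x ^ 2 ∨ y = x ^ 3)).Connected := by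
  intro hcon
  haveI : Fact p.Prime := ⟨hp⟩
  set n := p - 1 with hn
  have hcard : Fintype.card (ZMod p)ˣ = n := by
    rw [ZMod.card_units_eq_totient, Nat.totient_prime hp]
  obtain ⟨g, hg⟩ := IsCyclic.exists_generator (α := (ZMod p)ˣ)
  have hog : orderOf g = n := by
    rw [orderOf_eq_card_of_forall_mem_zpowers hg, Nat.card_eq_fintype_card, hcard]
  have hn0 : n ≠ 0 := by
    have : 2 ≤ p := hp.two_le
    omega
  set m := n / q with hm
  have hmn : m * q = n := Nat.div_mul_cancel hqd
  have hm0 : m ≠ 0 := by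
    intro h; rw [h, zero_mul] at hmn; exact hn0 hmn.symm
  have horder : ∀ u : (ZMod p)ˣ, orderOf (u ^ m) ∣ q := by
    intro u
    apply orderOf_dvd_of_pow_eq_one
    rw [← pow_mul, hmn]
    have : u ^ Fintype.card (ZMod p)ˣ = 1 := pow_card_eq_one
    rwa [hcard] at this
  have key : ∀ (u : (ZMod p)ˣ) (k : ℕ), ¬ q ∣ k → (u ^ k) ^ m = 1 → u ^ m = 1 := by
    intro u k hk h
    have h1 : (u ^ m) ^ k = 1 := by
      rw [← pow_mul, mul_comm, pow_mul]; exact h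
    have h2 : orderOf (u ^ m) ∣ k := orderOf_dvd_of_pow_eq_one h1
    rcases (Nat.dvd_prime hq).1 (horder u) with h4 | h4
    · exact orderOf_eq_one_iff.1 h4
    · exact absurd (h4 ▸ h2) hk
  have hq2' : ¬ q ∣ 2 := fun h =>
    hq2 ((Nat.prime_dvd_prime_iff_eq hq Nat.prime_two).1 h)
  have hq3' : ¬ q ∣ 3 := fun h =>
    hq3 ((Nat.prime_dvd_prime_iff_eq hq Nat.prime_three).1 h)
  have hfwd : ∀ (u : (ZMod p)ˣ) (k : ℕ), u ^ m = 1 → (u ^ k) ^ m = 1 := by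
    intro u k h
    rw [← pow_mul, mul_comm, pow_mul, h, one_pow]
  have hadj : ∀ x y, (SimpleGraph.fromRel
      (fun x y : (ZMod p)ˣ => y = x ^ 2 ∨ y = x ^ 3)).Adj x y →
      (x ^ m = 1 ↔ y ^ m = 1) := by
    intro x y hxy
    rw [SimpleGraph.fromRel_adj] at hxy
    rcases hxy.2 with (h | h) | (h | h) <;> subst h
    · exact ⟨fun h => hfwd x 2 h, fun h => key x 2 hq2' h⟩
    · exact ⟨fun h => hfwd x 3 h, fun h => key x 3 hq3' h⟩
    · exact ⟨fun h => key y 2 hq2' h, fun h => hfwd y 2 h⟩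
    · exact ⟨fun h => key y 3 hq3' h, fun h => hfwd y 3 h⟩
  have hreach : ∀ x y, (SimpleGraph.fromRel
      (fun x y : (ZMod p)ˣ => y = x ^ 2 ∨ y = x ^ 3)).Reachable x y →
      (x ^ m = 1 ↔ y ^ m = 1) := by
    intro x y hr
    obtain ⟨w⟩ := hr
    induction w with
    | nil => rfl
    | cons h _ ih => exact (hadj _ _ h).trans ih
  have h1g := hreach 1 g (hcon.preconnected 1 g)
  have hg1 : g ^ m = 1 := h1g.1 (one_pow m)
  have : n ∣ m := hog ▸ orderOf_dvd_of_pow_eq_one hg1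
  have hle : n ≤ m := Nat.le_of_dvd (Nat.pos_of_ne_zero hm0) this
  have : 2 ≤ q := hq.two_le
  nlinarith [Nat.pos_of_ne_zero hm0]
end
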